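/- Let G be a graph with a fixed vertex ordering, let e = v₁v₂ be an edge of G, and let η be an exponent function with η(v₂) = 0 and such that the coefficient of x^η in P_{G−e} is nonzero. Define η' by η'(v₁) = η(v₁) + 1 and η'(v) = η(v) otherwise. Then the coefficient of x^{η'} in P_G is nonzero (up to sign, since P_G = ±(x_{v₁} − x_{v₂})·P_{G−e}). -/

import Mathlib

open MvPolynomial Finset

/- The graph polynomial `P_G = ∏_{uv ∈ E(G), u < v} (x_v - x_u)`. -/
open scoped Classical in
noncomputable def graphPoly {V : Type*} [Fintype V] [LinearOrder V]
    (G : SimpleGraph V) : MvPolynomial V ℝ :=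
  ∏ p ∈ Finset.univ.filter (fun p : V × V => G.Adj p.1 p.2 ∧ p.1 < p.2),
    (X p.2 - X p.1)

/- The signed graph polynomial `P_{G,σ} = ∏_{uv ∈ E(G), u < v} (x_v - σ(uv)·x_u)`. -/
open scoped Classical in
noncomputable def signedGraphPoly {V : Type*} [Fintype V] [LinearOrder V]
    (G : SimpleGraph V) (σ : Sym2 V → ℤ) : MvPolynomial V ℤ :=
  ∏ p ∈ Finset.univ.filter (fun p : V × V => G.Adj p.1 p.2 ∧ p.1 < p.2),
    (X p.2 - C (σ s(p.1, p.2)) * X p.1)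

/- `H` is a minor of `G`: branch sets. -/
def SimpleGraph.IsMinor {W V : Type*} (H : SimpleGraph W) (G : SimpleGraph V) : Prop :=
  ∃ f : W → Set V,
    (∀ w, (G.induce (f w)).Connected) ∧
    (∀ w₁ w₂, w₁ ≠ w₂ → Disjoint (f w₁) (f w₂)) ∧
    (∀ w₁ w₂, H.Adj w₁ w₂ → ∃ v₁ ∈ f w₁, ∃ v₂ ∈ f w₂, G.Adj v₁ v₂)

/- A graph is planar iff it has no `K₅` and no `K₃,₃` minor (Wagner's theorem). -/
def SimpleGraph.IsPlanar {V : Type*} (G : SimpleGraph V) : Prop :=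
  ¬ SimpleGraph.IsMinor (completeGraph (Fin 5)) G ∧
  ¬ SimpleGraph.IsMinor (completeBipartiteGraph (Fin 3) (Fin 3)) G


/- If `η(v₂) = 0` and the coefficient of `x^η` in `P_{G-e}` is nonzero (`e = v₁v₂`),
then the coefficient of `x^{η'}` in `P_G` is nonzero, where `η'` raises the
exponent of `v₁` by one. -/
theorem stmt_4 {V : Type*} [Fintype V] [LinearOrder V] (G : SimpleGraph V)
    (v₁ v₂ : V) (he : G.Adj v₁ v₂) (η : V →₀ ℕ) (hη2 : η v₂ = 0)
    (h : MvPolynomial.coeff η (graphPoly (G.deleteEdges {s(v₁, v₂)})) ≠ 0) :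
    MvPolynomial.coeff (η + Finsupp.single v₁ 1) (graphPoly G) ≠ 0 := by
  classical
  have hne : v₁ ≠ v₂ := G.ne_of_adj he
  have key : ∀ (a b : V), a < b → s(a, b) = s(v₁, v₂) →
      graphPoly G = (X b - X a) * graphPoly (G.deleteEdges {s(v₁, v₂)}) := by
    intro a b hab hs
    have hadj : G.Adj a b := by
      rcases Sym2.eq_iff.mp hs with ⟨rfl, rfl⟩ | ⟨rfl, rfl⟩
      · exact he
      · exact he.symm
    have hset : (univ.filter (fun p : V × V => G.Adj p.1 p.2 ∧ p.1 < p.2)) =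
        insert (a, b) (univ.filter (fun p : V × V =>
          (G.deleteEdges {s(v₁, v₂)}).Adj p.1 p.2 ∧ p.1 < p.2)) := by
      ext p
      simp only [mem_filter, mem_univ, true_and, mem_insert,
        SimpleGraph.deleteEdges_adj, Set.mem_singleton_iff]
      constructor
      · rintro ⟨hp, hlt⟩
        by_cases hps : s(p.1, p.2) = s(v₁, v₂)
        · left
          rcases Sym2.eq_iff.mp (hps.trans hs.symm) with ⟨h1, h2⟩ | ⟨h1, h2⟩
          · exact Prod.ext h1 h2
          · exact absurd (h2 ▸ h1 ▸ hlt) (not_lt.mpr hab.le)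
        · exact Or.inr ⟨⟨hp, hps⟩, hlt⟩
      · rintro (rfl | ⟨⟨hp, -⟩, hlt⟩)
        · exact ⟨hadj, hab⟩
        · exact ⟨hp, hlt⟩
    have hnot : (a, b) ∉ (univ.filter (fun p : V × V =>
        (G.deleteEdges {s(v₁, v₂)}).Adj p.1 p.2 ∧ p.1 < p.2)) := by
      simp only [mem_filter, mem_univ, true_and, SimpleGraph.deleteEdges_adj,
        Set.mem_singleton_iff, not_and]
      exact fun ⟨_, hns⟩ _ => hns hs
    rw [graphPoly, graphPoly, hset, Finset.prod_insert hnot]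
    congr 1
    exact Finset.prod_congr (by ext p; simp) (fun _ _ => rfl)
  set Q := graphPoly (G.deleteEdges {s(v₁, v₂)}) with hQ
  have hns : v₂ ∉ (η + Finsupp.single v₁ 1).support := by
    simp [Finsupp.mem_support_iff, Finsupp.single_apply, hη2, hne]
  have hmem1 : v₁ ∈ (η + Finsupp.single v₁ 1).support := by
    simp [Finsupp.mem_support_iff, Finsupp.single_apply]
  have hsub : η + Finsupp.single v₁ 1 - Finsupp.single v₁ 1 = η := by
    simp
  rcases lt_or_gt_of_ne hne with hlt | hlt
  · rw [key v₁ v₂ hlt rfl, sub_mul, coeff_sub, coeff_X_mul', coeff_X_mul',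
      if_neg hns, if_pos hmem1, hsub]
    simpa using h
  · rw [key v₂ v₁ hlt (Sym2.eq_swap), sub_mul, coeff_sub, coeff_X_mul', coeff_X_mul',
      if_pos hmem1, if_neg hns, hsub]
    simpa using h
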